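/- Let D ∈ ℝ^{N×N} be symmetric positive definite and let κ₁, κ₂ > 0. Then the block matrix F = [[−κ₁ D, I_N],[−κ₂ D, 0_N]] ∈ ℝ^{2N×2N} is Hurwitz, i.e., every complex eigenvalue of F has strictly negative real part. Equivalently, there exist symmetric positive definite matrices P, Q̃ ∈ ℝ^{2N×2N} with Fᵀ P + P F = −Q̃. -/

import Mathlib

open Matrix MeasureTheory

noncomputable section

/-- `π_y = I - y yᵀ`: the orthogonal projection onto the hyperplane orthogonal to the
unit vector `y`. -/
def projMat {d : ℕ} (y : Fin d → ℝ) : Matrix (Fin d) (Fin d) ℝ :=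
  1 - Matrix.vecMulVec y y

/-- A (symmetric positive-semidefinite valued) matrix function `Σ : [0,∞) → ℝ^{ι×ι}` is
*persistently exciting* (PE) if there are `T > 0`, `μ > 0` with
`(1/T) ∫_t^{t+T} Σ(τ) dτ ⪰ μ I` for all `t ≥ 0`; the Loewner bound is stated via
quadratic forms. -/
def MatrixPE {ι : Type*} [Fintype ι] (Sig : ℝ → Matrix ι ι ℝ) : Prop :=
  ∃ T > (0 : ℝ), ∃ μ > (0 : ℝ), ∀ t ≥ (0 : ℝ), ∀ x : ι → ℝ,
    μ * (x ⬝ᵥ x) ≤ (1 / T) * ∫ τ in t..(t + T), x ⬝ᵥ (Sig τ).mulVec x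

/-- A unit-vector valued function `y : [0,∞) → S^{d-1}` is PE if `t ↦ π_{y(t)}` is PE. -/
def BearingPE {d : ℕ} (y : ℝ → Fin d → ℝ) : Prop :=
  MatrixPE fun t => projMat (y t)

/-- Incidence matrix `H` of the oriented graph whose `k`-th edge goes from
`eInit k` to `eTerm k`. -/
def incMat {n m : ℕ} (eInit eTerm : Fin m → Fin n) : Matrix (Fin m) (Fin n) ℝ :=
  Matrix.of fun k i => if i = eTerm k then 1 else if i = eInit k then -1 else 0

/-- `H̄ = H ⊗ I_d`. -/
def hbar (d : ℕ) {n m : ℕ} (eInit eTerm : Fin m → Fin n) :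
    Matrix (Fin m × Fin d) (Fin n × Fin d) ℝ :=
  Matrix.of fun ka ib => incMat eInit eTerm ka.1 ib.1 * (if ka.2 = ib.2 then 1 else 0)

/-- `L = H̄ᵀ H̄`, the ordinary graph Laplacian tensored with `I_d`. -/
def lapMat (d : ℕ) {n m : ℕ} (eInit eTerm : Fin m → Fin n) :
    Matrix (Fin n × Fin d) (Fin n × Fin d) ℝ :=
  (hbar d eInit eTerm)ᵀ * hbar d eInit eTerm

/-- Block diagonal matrix `blkdiag (f 1, …, f m)` with `d × d` blocks. -/
def blkdiag {m d : ℕ} (f : Fin m → Matrix (Fin d) (Fin d) ℝ) :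
    Matrix (Fin m × Fin d) (Fin m × Fin d) ℝ :=
  Matrix.of fun ka lb => if ka.1 = lb.1 then f ka.1 ka.2 lb.2 else 0

/-- The `k`-th oriented edge vector `p̄_k = p_j - p_i`. -/
def edgeVec {d n m : ℕ} (eInit eTerm : Fin m → Fin n) (p : Fin n → Fin d → ℝ) (k : Fin m) :
    Fin d → ℝ :=
  p (eTerm k) - p (eInit k)

/-- Euclidean norm on `ℝ^d` (as `Fin d → ℝ`). -/
def euclNorm {d : ℕ} (x : Fin d → ℝ) : ℝ := Real.sqrt (x ⬝ᵥ x)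

/-- The bearing `ḡ_k = p̄_k / ‖p̄_k‖` of the `k`-th edge. -/
def bearingVec {d n m : ℕ} (eInit eTerm : Fin m → Fin n) (p : Fin n → Fin d → ℝ) (k : Fin m) :
    Fin d → ℝ :=
  (euclNorm (edgeVec eInit eTerm p k))⁻¹ • edgeVec eInit eTerm p k

/-- The bearing Laplacian `L_B(p) = H̄ᵀ blkdiag(π_{ḡ_1},…,π_{ḡ_m}) H̄`. -/
def bearingLap {d n m : ℕ} (eInit eTerm : Fin m → Fin n) (p : Fin n → Fin d → ℝ) :
    Matrix (Fin n × Fin d) (Fin n × Fin d) ℝ :=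
  (hbar d eInit eTerm)ᵀ * blkdiag (fun k => projMat (bearingVec eInit eTerm p k)) *
    hbar d eInit eTerm

/-- The simple undirected graph underlying the edge list. -/
def formationGraph {n m : ℕ} (eInit eTerm : Fin m → Fin n) : SimpleGraph (Fin n) :=
  SimpleGraph.fromRel fun i j => ∃ k, eInit k = i ∧ eTerm k = j

/-- `C₁ = blkdiag(I_d, 0, …, 0)`: the leader's position-measurement matrix. -/
def leaderC1 (d : ℕ) {n : ℕ} (leader : Fin n) :
    Matrix (Fin n × Fin d) (Fin n × Fin d) ℝ :=
  Matrix.of fun ia jb => if ia.1 = leader ∧ jb.1 = leader ∧ ia.2 = jb.2 then 1 else 0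

end

noncomputable section

/-- `A = [[0, I],[0, 0]]`: the double-integrator system matrix. -/
def amat (ι : Type*) [Fintype ι] [DecidableEq ι] : Matrix (ι ⊕ ι) (ι ⊕ ι) ℝ :=
  Matrix.fromBlocks 0 1 0 0

/-- `D ⬝ [I 0]`: output matrix reading the first (position) block through `D`. -/
def outMat {ι : Type*} [Fintype ι] [DecidableEq ι] (D : Matrix ι ι ℝ) :
    Matrix ι (ι ⊕ ι) ℝ :=
  D * Matrix.fromCols 1 0

end

section HurwitzHelpers
open ComplexOrder

private lemma cdot_split' {N : ℕ} (D : Matrix (Fin N) (Fin N) ℝ) (hsym : Dᵀ = D) (x : Fin N → ℂ) :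
    star x ⬝ᵥ (D.map (algebraMap ℝ ℂ)) *ᵥ x =
      (((fun i => (x i).re) ⬝ᵥ D *ᵥ (fun i => (x i).re)
        + (fun i => (x i).im) ⬝ᵥ D *ᵥ (fun i => (x i).im) : ℝ) : ℂ) := by
  set a : Fin N → ℝ := fun i => (x i).re with ha
  set b : Fin N → ℝ := fun i => (x i).im with hb
  have key : ∀ i, (star x i * ∑ j, (D.map (algebraMap ℝ ℂ)) i j * x j) =
      Complex.mk (∑ j, (a i * (D i j * a j) + b i * (D i j * b j)))
                 (∑ j, (a i * (D i j * b j) - b i * (D i j * a j))) := by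
    intro i
    rw [Finset.mul_sum, Complex.ext_iff]
    constructor
    · simp [Complex.re_sum, Complex.mul_re, Complex.mul_im, mul_comm, mul_assoc, mul_left_comm, ha, hb]
    · simp only [Complex.im_sum]
      refine Finset.sum_congr rfl fun j _ => ?_
      simp [Complex.mul_re, Complex.mul_im]
      ring
  have him : ∑ i, ∑ j, (a i * (D i j * b j) - b i * (D i j * a j)) = 0 := by
    have h1 : ∑ i, ∑ j, a i * (D i j * b j) = ∑ i, ∑ j, b i * (D i j * a j) := by
      rw [Finset.sum_comm]
      refine Finset.sum_congr rfl fun j _ => Finset.sum_congr rfl fun i _ => ?_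
      have hDij : D i j = D j i := (congrFun (congrFun hsym i) j).symm
      rw [hDij]; ring
    simp [Finset.sum_sub_distrib, h1]
  apply Complex.ext
  · simp only [dotProduct, Matrix.mulVec, Complex.re_sum, key, Complex.ofReal_re]
    simp [Finset.mul_sum, ← Finset.sum_add_distrib]
  · simp only [dotProduct, Matrix.mulVec, Complex.im_sum, key, Complex.ofReal_im]
    exact him

private lemma posDef_map_complex' {N : ℕ} {D : Matrix (Fin N) (Fin N) ℝ} (hD : D.PosDef) :
    (D.map (algebraMap ℝ ℂ)).PosDef := by
  have hsym : Dᵀ = D := hD.1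
  refine Matrix.PosDef.of_dotProduct_mulVec_pos ?_ ?_
  · exact hD.1.map (algebraMap ℝ ℂ) (fun r => by simp [Complex.conj_ofReal])
  · intro x hx
    rw [cdot_split' D hsym x]
    rw [Complex.zero_lt_real]
    set a : Fin N → ℝ := fun i => (x i).re
    set b : Fin N → ℝ := fun i => (x i).im
    have hab : a ≠ 0 ∨ b ≠ 0 := by
      by_contra h
      push_neg at h
      apply hx
      funext i
      have h1 := congrFun h.1 i
      have h2 := congrFun h.2 i
      exact Complex.ext h1 h2
    rcases hab with h | h
    · have := hD.dotProduct_mulVec_pos h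
      have h2 := hD.posSemidef.dotProduct_mulVec_nonneg b
      simp only [star_trivial] at this h2 ⊢
      nlinarith [this, h2]
    · have := hD.dotProduct_mulVec_pos h
      have h2 := hD.posSemidef.dotProduct_mulVec_nonneg a
      simp only [star_trivial] at this h2 ⊢
      nlinarith [this, h2]

end HurwitzHelpers

set_option maxHeartbeats 1600000 in
open ComplexOrder in
/-- For symmetric positive definite `D` and `κ₁, κ₂ > 0`, the
block matrix `F = [[-κ₁D, I],[-κ₂D, 0]]` is Hurwitz (all complex eigenvalues have
negative real part); equivalently there are symmetric positive definite `P, Q̃` with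
`FᵀP + PF = -Q̃`. -/
theorem stmt12 {N : ℕ} (D : Matrix (Fin N) (Fin N) ℝ) (hD : D.PosDef)
    (κ₁ κ₂ : ℝ) (h₁ : 0 < κ₁) (h₂ : 0 < κ₂)
    (F : Matrix (Fin N ⊕ Fin N) (Fin N ⊕ Fin N) ℝ)
    (hF : F = Matrix.fromBlocks (-(κ₁ • D)) 1 (-(κ₂ • D)) 0) :
    (∀ z : ℂ, z ∈ spectrum ℂ (F.map (algebraMap ℝ ℂ)) → z.re < 0) ∧
    ∃ P Qt : Matrix (Fin N ⊕ Fin N) (Fin N ⊕ Fin N) ℝ,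
      P.PosDef ∧ Qt.PosDef ∧ Fᵀ * P + P * F = -Qt := by
  have hDsym : Dᵀ = D := by
    ext i j
    have := congrFun (congrFun hD.1 i) j
    simpa using this
  have hDdet : IsUnit D.det := isUnit_iff_ne_zero.2 hD.det_pos.ne'
  have hDinv : D * D⁻¹ = 1 := Matrix.mul_nonsing_inv D hDdet
  have hDinv' : D⁻¹ * D = 1 := Matrix.nonsing_inv_mul D hDdet
  have hDinvsym : (D⁻¹)ᵀ = D⁻¹ := by rw [Matrix.transpose_nonsing_inv, hDsym]
  constructor
  · -- eigenvalue part
    set Dc := D.map (algebraMap ℝ ℂ) with hDc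
    have hFc : F.map (algebraMap ℝ ℂ) =
        Matrix.fromBlocks (-((κ₁:ℂ) • Dc)) 1 (-((κ₂:ℂ) • Dc)) 0 := by
      subst hF
      ext (i|i) (j|j) <;>
        simp [hDc, Matrix.map_apply, Matrix.one_apply, apply_ite]
    intro z hz
    rw [spectrum.mem_iff] at hz
    have hdet : (algebraMap ℂ (Matrix (Fin N ⊕ Fin N) (Fin N ⊕ Fin N) ℂ) z
        - F.map (algebraMap ℝ ℂ)).det = 0 := by
      by_contra h
      exact hz ((Matrix.isUnit_iff_isUnit_det _).2 (isUnit_iff_ne_zero.2 h))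
    obtain ⟨v, hv0, hveq⟩ := (Matrix.exists_mulVec_eq_zero_iff).2 hdet
    set u : Fin N → ℂ := fun i => v (Sum.inl i) with hu'
    set w : Fin N → ℂ := fun i => v (Sum.inr i) with hw'
    have hv : v = Sum.elim u w := by funext i; cases i <;> rfl
    have hmv : (F.map (algebraMap ℝ ℂ)) *ᵥ v = z • v := by
      have := hveq
      rw [Matrix.sub_mulVec, Algebra.algebraMap_eq_smul_one, Matrix.smul_mulVec,
        Matrix.one_mulVec, sub_eq_zero] at this
      exact this.symm
    rw [hFc, hv, Matrix.fromBlocks_mulVec] at hmv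
    have e1 : -((κ₁:ℂ) • Dc) *ᵥ u + (1 : Matrix (Fin N) (Fin N) ℂ) *ᵥ w = z • u := by
      funext i; exact congrFun hmv (Sum.inl i)
    have e2 : -((κ₂:ℂ) • Dc) *ᵥ u + (0 : Matrix (Fin N) (Fin N) ℂ) *ᵥ w = z • w := by
      funext i; exact congrFun hmv (Sum.inr i)
    rw [Matrix.one_mulVec] at e1
    rw [Matrix.zero_mulVec, add_zero] at e2
    have hu : u ≠ 0 := by
      intro h
      apply hv0
      rw [h] at e1
      have hw0 : w = 0 := by simpa using e1
      rw [hv, h, hw0]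
      funext i; cases i <;> rfl
    have e3 : z • (-((κ₁:ℂ) • Dc) *ᵥ u) + -((κ₂:ℂ) • Dc) *ᵥ u = (z^2) • u := by
      have h3 := congrArg (z • ·) e1
      simp only [smul_add] at h3
      rw [← e2] at h3
      rw [smul_smul, ← pow_two] at h3
      exact h3
    have e4 := congrArg (fun y => star u ⬝ᵥ y) e3
    simp only [dotProduct_add, dotProduct_smul, Matrix.neg_mulVec,
      dotProduct_neg, Matrix.smul_mulVec, smul_eq_mul] at e4
    set q := star u ⬝ᵥ Dc *ᵥ u with hq'
    set s := star u ⬝ᵥ u with hs'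
    have hq : 0 < q := (posDef_map_complex' hD).dotProduct_mulVec_pos hu
    have hs : 0 < s := by
      rw [hs', dotProduct_comm]
      exact Matrix.dotProduct_self_star_pos_iff.2 hu
    rw [Complex.lt_def] at hq hs
    obtain ⟨hqre, hqim⟩ := hq
    obtain ⟨hsre, hsim⟩ := hs
    simp only [Complex.zero_re, Complex.zero_im] at hqre hqim hsre hsim
    have E : z * (-((κ₁:ℂ) * q)) + (-((κ₂:ℂ) * q)) = z^2 * s := by
      simpa using e4
    by_contra hc
    push_neg at hc
    set a := z.re with ha'
    set b := z.im with hb'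
    rw [Complex.ext_iff] at E
    obtain ⟨Ere, Eim⟩ := E
    simp only [pow_two, Complex.mul_re, Complex.mul_im, Complex.add_re, Complex.add_im,
      Complex.neg_re, Complex.neg_im, Complex.ofReal_re, Complex.ofReal_im] at Ere Eim
    rw [← hqim, ← hsim] at Ere Eim
    ring_nf at Ere Eim
    have h5 : 0 < 2 * a * s.re + κ₁ * q.re := by
      nlinarith [mul_nonneg hc hsre.le, mul_pos h₁ hqre]
    have hb0 : b * (2 * a * s.re + κ₁ * q.re) = 0 := by linear_combination -Eim
    have hb : b = 0 := by
      rcases mul_eq_zero.1 hb0 with hb | hb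
      · exact hb
      · linarith
    have him0 : z.im = 0 := hb
    rw [him0] at Ere
    ring_nf at Ere
    nlinarith [mul_nonneg hc (mul_pos h₁ hqre).le,
      mul_nonneg (mul_nonneg hc hc) hsre.le, mul_pos h₂ hqre]
  · -- Lyapunov part
    have hPQ : (Matrix.fromBlocks (κ₁ • D + (2*κ₂/κ₁) • 1) (-1) (-1)
        ((2*κ₁/κ₂) • 1 + (2/κ₁) • D⁻¹)).PosDef ∧
        (Matrix.fromBlocks ((2*κ₁^2) • (D*D) + (2*κ₂) • D) 0 0
          ((2:ℝ) • (1 : Matrix (Fin N) (Fin N) ℝ))).PosDef := by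
      constructor
      · refine Matrix.PosDef.of_dotProduct_mulVec_pos ?_ ?_
        · show _ = _
          rw [Matrix.conjTranspose_eq_transpose_of_trivial, Matrix.fromBlocks_transpose,
            Matrix.transpose_neg, Matrix.transpose_one, Matrix.transpose_add,
            Matrix.transpose_add, Matrix.transpose_smul, Matrix.transpose_smul,
            Matrix.transpose_smul, Matrix.transpose_smul, hDsym, hDinvsym, Matrix.transpose_one]
        · intro x hx
          set u : Fin N → ℝ := fun i => x (Sum.inl i) with hu'
          set v : Fin N → ℝ := fun i => x (Sum.inr i) with hv'
          have hxv : x = Sum.elim u v := by funext i; cases i <;> rfl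
          rw [star_trivial, hxv, Matrix.fromBlocks_mulVec, sumElim_dotProduct_sumElim]
          simp only [Sum.elim_comp_inl, Sum.elim_comp_inr, Matrix.add_mulVec,
            Matrix.smul_mulVec, Matrix.one_mulVec, Matrix.neg_mulVec,
            dotProduct_add, dotProduct_smul, dotProduct_neg, smul_eq_mul]
          set uu := u ⬝ᵥ u with huu'
          set vv := v ⬝ᵥ v with hvv'
          set uv := u ⬝ᵥ v with huv'
          set uDu := u ⬝ᵥ D *ᵥ u with huDu'
          set vDiv := v ⬝ᵥ D⁻¹ *ᵥ v with hvDiv'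
          have hvu : v ⬝ᵥ u = uv := dotProduct_comm v u
          rw [hvu]
          have huDu : 0 ≤ uDu := by have := hD.posSemidef.dotProduct_mulVec_nonneg u; simpa using this
          have hvDiv : 0 ≤ vDiv := by have := hD.inv.posSemidef.dotProduct_mulVec_nonneg v; simpa using this
          have huu : 0 ≤ uu := by have := dotProduct_self_star_nonneg u; simpa using this
          have hvv : 0 ≤ vv := by have := dotProduct_self_star_nonneg v; simpa using this
          set c := κ₂/κ₁ with hc'
          have hc : 0 < c := div_pos h₂ h₁
          have hself : 0 ≤ c*c*uu - 2*c*uv + vv := by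
            have h0 : 0 ≤ (c • u - v) ⬝ᵥ (c • u - v) := by
              have := dotProduct_self_star_nonneg (c • u - v); simpa using this
            have hexp : (c • u - v) ⬝ᵥ (c • u - v) = c*c*uu - 2*c*uv + vv := by
              simp only [sub_dotProduct, dotProduct_sub, smul_dotProduct,
                dotProduct_smul, smul_eq_mul, ← huu', ← hvv', ← huv']
              rw [dotProduct_comm v u, ← huv']
              ring
            rw [hexp] at h0; exact h0
          have h6 : 0 ≤ c*uu - 2*uv + (1/c)*vv := by
            have h7 : 0 ≤ (c*c*uu - 2*c*uv + vv) / c := div_nonneg hself hc.le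
            have h8 : (c*c*uu - 2*c*uv + vv) / c = c*uu - 2*uv + (1/c)*vv := by
              field_simp
            rwa [h8] at h7
          have hcoef1 : 2*κ₂/κ₁ = 2*c := by rw [hc']; ring
          have hcoef2 : 2*κ₁/κ₂ = 2*(1/c) := by rw [hc']; field_simp
          rw [hcoef1, hcoef2]
          have hpos : 0 < c*uu + (1/c)*vv := by
            have huv0 : u ≠ 0 ∨ v ≠ 0 := by
              by_contra h
              push_neg at h
              exact hx (by rw [hxv, h.1, h.2]; funext i; cases i <;> rfl)
            rcases huv0 with h | h
            · have huup : 0 < uu := by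
                have := Matrix.dotProduct_self_star_pos_iff (v := u) |>.2 h; simpa using this
              have := mul_pos hc huup
              have h9 : 0 ≤ (1/c)*vv := mul_nonneg (by positivity) hvv
              linarith
            · have hvvp : 0 < vv := by
                have := Matrix.dotProduct_self_star_pos_iff (v := v) |>.2 h; simpa using this
              have := mul_pos (by positivity : (0:ℝ) < 1/c) hvvp
              have h9 : 0 ≤ c*uu := mul_nonneg hc.le huu
              linarith
          have hA : 0 ≤ κ₁ * uDu := mul_nonneg h₁.le huDu
          have hB : 0 ≤ 2/κ₁ * vDiv := mul_nonneg (by positivity) hvDiv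
          nlinarith [h6, hpos, hA, hB]
      · refine Matrix.PosDef.of_dotProduct_mulVec_pos ?_ ?_
        · show _ = _
          rw [Matrix.conjTranspose_eq_transpose_of_trivial, Matrix.fromBlocks_transpose,
            Matrix.transpose_zero, Matrix.transpose_add, Matrix.transpose_smul,
            Matrix.transpose_smul, Matrix.transpose_mul, hDsym, Matrix.transpose_smul,
            Matrix.transpose_one]
        · intro x hx
          set u : Fin N → ℝ := fun i => x (Sum.inl i) with hu'
          set v : Fin N → ℝ := fun i => x (Sum.inr i) with hv'
          have hxv : x = Sum.elim u v := by funext i; cases i <;> rfl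
          rw [star_trivial, hxv, Matrix.fromBlocks_mulVec, sumElim_dotProduct_sumElim]
          simp only [Sum.elim_comp_inl, Sum.elim_comp_inr, Matrix.add_mulVec,
            Matrix.smul_mulVec, Matrix.one_mulVec, Matrix.zero_mulVec, add_zero, zero_add,
            dotProduct_add, dotProduct_smul, dotProduct_zero, smul_eq_mul]
          have hvm : u ᵥ* D = D *ᵥ u := by rw [← Matrix.vecMul_transpose, hDsym]
          have hDD : u ⬝ᵥ (D*D) *ᵥ u = (D *ᵥ u) ⬝ᵥ (D *ᵥ u) := by
            rw [← Matrix.mulVec_mulVec, dotProduct_mulVec, hvm]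
          have hDDnn : 0 ≤ u ⬝ᵥ (D*D) *ᵥ u := by
            rw [hDD]
            have := dotProduct_self_star_nonneg (D *ᵥ u); simpa using this
          have hvv : 0 ≤ v ⬝ᵥ v := by
            have := dotProduct_self_star_nonneg v; simpa using this
          by_cases hu0 : u = 0
          · have hv0 : v ≠ 0 := by
              intro h
              exact hx (by rw [hxv, hu0, h]; funext i; cases i <;> rfl)
            have hvvp : 0 < v ⬝ᵥ v := by
              have := Matrix.dotProduct_self_star_pos_iff (v := v) |>.2 hv0; simpa using this
            rw [hu0]
            simp
            positivity
          · have huDu : 0 < u ⬝ᵥ D *ᵥ u := by have := hD.dotProduct_mulVec_pos hu0; simpa using this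
            nlinarith [hDDnn, hvv, huDu, mul_pos (mul_pos h₁ h₁) huDu]
    refine ⟨Matrix.fromBlocks (κ₁ • D + (2*κ₂/κ₁) • 1) (-1) (-1)
        ((2*κ₁/κ₂) • 1 + (2/κ₁) • D⁻¹),
      Matrix.fromBlocks ((2*κ₁^2) • (D*D) + (2*κ₂) • D) 0 0 ((2:ℝ) • 1),
      hPQ.1, hPQ.2, ?_⟩
    subst hF
    rw [Matrix.fromBlocks_transpose, Matrix.fromBlocks_neg,
      Matrix.fromBlocks_multiply, Matrix.fromBlocks_multiply, Matrix.fromBlocks_add]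
    simp only [Matrix.transpose_neg, Matrix.transpose_smul, hDsym, Matrix.transpose_one,
      Matrix.transpose_zero]
    refine Matrix.fromBlocks_inj.mpr ⟨?_, ?_, ?_, ?_⟩
    · simp only [mul_add, add_mul, smul_mul_assoc, mul_smul_comm, mul_one, one_mul,
        mul_neg, neg_mul, neg_add, smul_smul, smul_add, hDinv, hDinv', neg_zero,
        zero_mul, mul_zero, add_zero, zero_add, smul_neg, neg_neg, neg_smul]
      match_scalars <;> field_simp <;> ring
    · simp only [mul_add, add_mul, smul_mul_assoc, mul_smul_comm, mul_one, one_mul,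
        mul_neg, neg_mul, neg_add, smul_smul, smul_add, hDinv, hDinv', neg_zero,
        zero_mul, mul_zero, add_zero, zero_add, smul_neg, neg_neg, neg_smul]
      match_scalars <;> field_simp <;> ring
    · simp only [mul_add, add_mul, smul_mul_assoc, mul_smul_comm, mul_one, one_mul,
        mul_neg, neg_mul, neg_add, smul_smul, smul_add, hDinv, hDinv', neg_zero,
        zero_mul, mul_zero, add_zero, zero_add, smul_neg, neg_neg, neg_smul]
      match_scalars <;> field_simp <;> ring
    · simp only [mul_add, add_mul, smul_mul_assoc, mul_smul_comm, mul_one, one_mul,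
        mul_neg, neg_mul, neg_add, smul_smul, smul_add, hDinv, hDinv', neg_zero,
        zero_mul, mul_zero, add_zero, zero_add, smul_neg, neg_neg, neg_smul]
      match_scalars <;> field_simp <;> ring
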